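/- arXiv:1710.07367 — 2 statements merged into one kernel-verified Lean document; each statement's English description precedes it below -/
import Mathlib

section
/- Suppose the Fréchet derivative f' is uniformly continuous on C and the stepsizes (γ_k) satisfy the open loop rule. Then the sequence (x_k) generated by the Frank–Wolfe algorithm satisfies f(x_k) → f* = inf_{x ∈ C} f(x) as k → ∞. -/
open Filter Topology Set

/-- Gradient inequality for convex differentiable functions. -/
lemma grad_ineq {X : Type*} [NormedAddCommGroup X] [NormedSpace ℝ X]
    (f : X → ℝ) (hfconv : ConvexOn ℝ Set.univ f) (a b : X) (D : X →L[ℝ] ℝ)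
    (hD : HasFDerivAt f D a) : D (b - a) ≤ f b - f a := by
  rcases eq_or_ne b a with rfl | hne
  · simp
  set g : ℝ → ℝ := fun t => f (a + t • (b - a)) with hg
  have hgconv : ConvexOn ℝ Set.univ g := by
    have h1 := hfconv.comp_affineMap (AffineMap.lineMap a b)
    have h2 : g = f ∘ (AffineMap.lineMap a b) := by
      funext t
      simp [Function.comp, AffineMap.lineMap_apply_module', g, add_comm]
    rw [h2]
    simpa using h1
  have hline : HasDerivAt (fun t : ℝ => a + t • (b - a)) (b - a) (0 : ℝ) := by
    simpa using ((hasDerivAt_id (0:ℝ)).smul_const (b - a)).const_add a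
  have hgd : HasDerivAt g (D (b - a)) 0 := by
    have : HasFDerivAt f D (a + (0:ℝ) • (b - a)) := by simpa using hD
    simpa [g, Function.comp_def] using this.comp_hasDerivAt 0 hline
  have := hgconv.le_slope_of_hasDerivAt (mem_univ (0:ℝ)) (mem_univ (1:ℝ)) one_pos hgd
  have hs : slope g 0 1 = f b - f a := by
    simp [slope_def_field, g]
  linarith [hs ▸ this]

/-- A standard recursion convergence lemma. -/
lemma rec_conv (h δ γ : ℕ → ℝ) (hnn : ∀ k, 0 ≤ h k)
    (hγ : ∀ k, γ k ∈ Set.Ioc (0:ℝ) 1)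
    (hδ : Tendsto δ atTop (𝓝 0))
    (hγsum : Tendsto (fun n => ∑ k ∈ Finset.range n, γ k) atTop atTop)
    (hrec : ∀ k, h (k+1) ≤ (1 - γ k) * h k + γ k * δ k) :
    Tendsto h atTop (𝓝 0) := by
  rw [Metric.tendsto_atTop]
  intro ε hε
  obtain ⟨N₁, hN₁⟩ := Metric.tendsto_atTop.mp hδ (ε/2) (by positivity)
  have hδ' : ∀ k ≥ N₁, δ k < ε / 2 := by
    intro k hk
    have := hN₁ k hk
    rw [Real.dist_eq, sub_zero] at this
    exact (le_abs_self _).trans_lt this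
  -- Claim A : some h k₀ < ε with k₀ ≥ N₁
  have claimA : ∃ k₀, N₁ ≤ k₀ ∧ h k₀ < ε := by
    by_contra hcon
    push_neg at hcon
    have hdec : ∀ k, N₁ ≤ k → h (k+1) ≤ h k - γ k * (ε/2) := by
      intro k hk
      have h1 := hrec k
      have h2 := hcon k hk
      have h3 := hδ' k hk
      have h4 := (hγ k).1
      have h5 := (hγ k).2
      nlinarith
    have hsum : ∀ n, h (N₁ + n) + (ε/2) * ∑ j ∈ Finset.range n, γ (N₁ + j) ≤ h N₁ := by
      intro n
      induction n with
      | zero => simp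
      | succ n ih =>
        have := hdec (N₁ + n) (Nat.le_add_right _ _)
        rw [Finset.sum_range_succ]
        have : h (N₁ + (n+1)) ≤ h (N₁ + n) - γ (N₁ + n) * (ε/2) := by
          rw [← Nat.add_assoc]; exact this
        nlinarith
    have htail : Tendsto (fun n => ∑ j ∈ Finset.range n, γ (N₁ + j)) atTop atTop := by
      have h1 : Tendsto (fun n => ∑ k ∈ Finset.range (N₁ + n), γ k) atTop atTop := by
        have := hγsum.comp (tendsto_add_atTop_nat N₁)
        simpa [Function.comp_def, Nat.add_comm] using this
      have h2 : ∀ n, ∑ j ∈ Finset.range n, γ (N₁ + j)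
          = (∑ k ∈ Finset.range (N₁ + n), γ k) - ∑ k ∈ Finset.range N₁, γ k := by
        intro n; rw [Finset.sum_range_add]; ring
      simp_rw [h2]
      exact h1.atTop_add tendsto_const_nhds
    obtain ⟨n, hn⟩ := (htail.eventually_ge_atTop ((h N₁ + 1) / (ε/2))).exists
    have := hsum n
    have hpos : (0:ℝ) < ε/2 := by positivity
    have := hnn (N₁ + n)
    have : (ε/2) * ∑ j ∈ Finset.range n, γ (N₁ + j) ≥ h N₁ + 1 := by
      rw [ge_iff_le, ← div_le_iff₀' hpos]
      exact hn
    linarith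
  obtain ⟨k₀, hk₀N, hk₀⟩ := claimA
  refine ⟨k₀, fun k hk => ?_⟩
  rw [Real.dist_eq, sub_zero, abs_of_nonneg (hnn k)]
  induction k, hk using Nat.le_induction with
  | base => exact hk₀
  | succ k hk ih =>
    have h1 := hrec k
    have h3 := hδ' k (hk₀N.trans hk)
    have h4 := (hγ k).1
    have h5 := (hγ k).2
    have h6 := hnn k
    nlinarith

/-- **Convergence of the Frank–Wolfe algorithm with open loop stepsizes**
(Theorem 3.2). If `f'` is uniformly continuous on `C` and the stepsizes satisfy the
open loop rule `γ_k ∈ (0,1]`, `γ_k → 0`, `∑ γ_k = ∞`, then `f(x_k) → f* = inf_C f`. -/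
theorem stmt_3
    {X : Type*} [NormedAddCommGroup X] [NormedSpace ℝ X] [CompleteSpace X]
    (C : Set X) (hCne : C.Nonempty) (hCcl : IsClosed C)
    (hCbd : Bornology.IsBounded C) (hCcv : Convex ℝ C)
    (f : X → ℝ) (f' : X → X →L[ℝ] ℝ)
    (hfconv : ConvexOn ℝ Set.univ f)
    (hfderiv : ∀ x : X, HasFDerivAt f (f' x) x)
    (hfUC : UniformContinuousOn f' C)
    (xstar : X) (hxstarC : xstar ∈ C) (hxstarmin : ∀ y ∈ C, f xstar ≤ f y)
    (x xbar : ℕ → X) (γ : ℕ → ℝ)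
    (hx0 : x 0 ∈ C)
    (hxbarC : ∀ k, xbar k ∈ C)
    (hxbarmin : ∀ k, ∀ y ∈ C, f' (x k) (xbar k) ≤ f' (x k) y)
    (hupdate : ∀ k, x (k + 1) = x k + γ k • (xbar k - x k))
    (hγ : ∀ k, γ k ∈ Set.Ioc (0 : ℝ) 1)
    (hγ0 : Tendsto γ atTop (𝓝 0))
    (hγsum : Tendsto (fun n => ∑ k ∈ Finset.range n, γ k) atTop atTop) :
    Tendsto (fun k => f (x k)) atTop (𝓝 (f xstar)) := by
  -- all iterates stay in C
  have hxC : ∀ k, x k ∈ C := by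
    intro k
    induction k with
    | zero => exact hx0
    | succ k ih =>
      rw [hupdate k]
      exact hCcv.add_smul_sub_mem ih (hxbarC k) ⟨(hγ k).1.le, (hγ k).2⟩
  -- a bound on diameters
  obtain ⟨D, hD⟩ := Metric.isBounded_iff.mp hCbd
  have hD0 : 0 ≤ D := by
    obtain ⟨c, hc⟩ := hCne
    have := hD hc hc
    simpa using this
  -- the error sequence
  set δ : ℕ → ℝ := fun k => ‖f' (x (k+1)) - f' (x k)‖ * D with hδdef
  have hδnn : ∀ k, 0 ≤ δ k := fun k => mul_nonneg (norm_nonneg _) hD0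
  have hδ0 : Tendsto δ atTop (𝓝 0) := by
    rw [Metric.tendsto_atTop]
    intro ε hε
    obtain ⟨η, hη0, hη⟩ := Metric.uniformContinuousOn_iff.mp hfUC (ε / (D + 1))
      (by positivity)
    obtain ⟨N, hN⟩ := Metric.tendsto_atTop.mp hγ0 (η / (D + 1)) (by positivity)
    refine ⟨N, fun k hk => ?_⟩
    have hγk : γ k < η / (D + 1) := by
      have := hN k hk
      rw [Real.dist_eq, sub_zero] at this
      exact (le_abs_self _).trans_lt this
    have hdist : dist (x (k+1)) (x k) < η := by
      rw [hupdate k]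
      have h1 : dist (x k + γ k • (xbar k - x k)) (x k) = γ k * ‖xbar k - x k‖ := by
        rw [dist_eq_norm]
        simp [norm_smul, abs_of_pos (hγ k).1]
      rw [h1]
      have h2 : ‖xbar k - x k‖ ≤ D := by
        rw [← dist_eq_norm]
        exact hD (hxbarC k) (hxC k)
      have h3 : γ k * ‖xbar k - x k‖ ≤ γ k * D := by
        exact mul_le_mul_of_nonneg_left h2 (hγ k).1.le
      have h4 : γ k * D < η := by
        have : γ k * (D + 1) < η := by
          rw [← lt_div_iff₀ (by positivity)] at *
          exact hγk
        nlinarith [(hγ k).1]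
      linarith
    have h5 := hη (x (k+1)) (hxC (k+1)) (x k) (hxC k) hdist
    rw [dist_eq_norm] at h5
    rw [Real.dist_eq, sub_zero, abs_of_nonneg (hδnn k)]
    have : δ k < ε / (D + 1) * (D + 1) := by
      have hnn := norm_nonneg (f' (x (k+1)) - f' (x k))
      simp only [hδdef]
      nlinarith
    rwa [div_mul_cancel₀ _ (by positivity : (D:ℝ) + 1 ≠ 0)] at this
  -- the objective gap sequence
  set h : ℕ → ℝ := fun k => f (x k) - f xstar with hhdef
  have hnn : ∀ k, 0 ≤ h k := fun k => sub_nonneg.mpr (hxstarmin _ (hxC k))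
  have hrec : ∀ k, h (k+1) ≤ (1 - γ k) * h k + γ k * δ k := by
    intro k
    -- descent inequality
    have key : f (x (k+1)) - f (x k) ≤ f' (x (k+1)) (x (k+1) - x k) := by
      have := grad_ineq f hfconv (x (k+1)) (x k) (f' (x (k+1))) (hfderiv _)
      have heq : f' (x (k+1)) (x k - x (k+1)) = -(f' (x (k+1)) (x (k+1) - x k)) := by
        rw [← map_neg]; congr 1; abel
      rw [heq] at this
      linarith
    have hstep : x (k+1) - x k = γ k • (xbar k - x k) := by
      rw [hupdate k]; abel
    have h1 : f' (x (k+1)) (x (k+1) - x k) = γ k * f' (x (k+1)) (xbar k - x k) := by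
      rw [hstep, map_smul]; rfl
    -- split the derivative term
    have h2 : f' (x (k+1)) (xbar k - x k)
        = f' (x k) (xbar k - x k) + (f' (x (k+1)) - f' (x k)) (xbar k - x k) := by
      simp
    have h3 : (f' (x (k+1)) - f' (x k)) (xbar k - x k) ≤ δ k := by
      calc (f' (x (k+1)) - f' (x k)) (xbar k - x k)
          ≤ ‖(f' (x (k+1)) - f' (x k)) (xbar k - x k)‖ := le_abs_self _
        _ ≤ ‖f' (x (k+1)) - f' (x k)‖ * ‖xbar k - x k‖ :=
            ContinuousLinearMap.le_opNorm _ _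
        _ ≤ ‖f' (x (k+1)) - f' (x k)‖ * D := by
            apply mul_le_mul_of_nonneg_left _ (norm_nonneg _)
            rw [← dist_eq_norm]
            exact hD (hxbarC k) (hxC k)
    have h4 : f' (x k) (xbar k - x k) ≤ -(h k) := by
      have hmin := hxbarmin k xstar hxstarC
      have hgrad := grad_ineq f hfconv (x k) xstar (f' (x k)) (hfderiv _)
      rw [map_sub] at hgrad ⊢
      simp only [hhdef]
      linarith
    have h5 : f' (x (k+1)) (xbar k - x k) ≤ -(h k) + δ k := by
      rw [h2]; linarith
    have h6 : γ k * f' (x (k+1)) (xbar k - x k) ≤ γ k * (-(h k) + δ k) :=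
      mul_le_mul_of_nonneg_left h5 (hγ k).1.le
    have h7 : f (x (k+1)) - f (x k) ≤ γ k * (-(h k) + δ k) := by
      rw [h1] at key; linarith
    have h8 : h (k+1) - h k ≤ γ k * (-(h k) + δ k) := by
      simp only [hhdef] at h7 ⊢
      linarith [h7]
    nlinarith [h8]
  have hconv := rec_conv h δ γ hnn hγ hδ0 hγsum hrec
  have := hconv.add_const (f xstar)
  simpa [hhdef] using this
end

section
/- Suppose the Fréchet derivative f' is uniformly continuous on C and the stepsizes (γ_k) satisfy the open loop rule. Then the sequence (x_k) generated by the generalized Frank–Wolfe algorithm for the composite objective φ = f + g satisfies φ(x_k) → φ* := inf_{x ∈ C} φ(x) as k → ∞. -/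
open Filter Topology Set


/-- Gradient inequality for convex differentiable functions. -/
lemma fw_grad_ineq {X : Type*} [NormedAddCommGroup X] [NormedSpace ℝ X]
    (f : X → ℝ) (f' : X → X →L[ℝ] ℝ) (hfconv : ConvexOn ℝ Set.univ f)
    (hfderiv : ∀ x : X, HasFDerivAt f (f' x) x) (x y : X) :
    f' x (y - x) ≤ f y - f x := by
  set v := y - x with hv
  have h1 : HasDerivAt (fun t : ℝ => x + t • v) v 0 := by
    simpa using ((hasDerivAt_id (0:ℝ)).smul_const v).const_add x
  have hline : HasDerivAt (fun t : ℝ => f (x + t • v)) (f' x v) 0 := by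
    have h2 := (hfderiv (x + (0:ℝ) • v)).comp_hasDerivAt 0 h1
    rw [zero_smul, add_zero] at h2
    exact h2
  have hslope := hasDerivAt_iff_tendsto_slope.mp hline
  have hmono : Tendsto (slope (fun t : ℝ => f (x + t • v)) 0) (𝓝[>] (0:ℝ)) (𝓝 (f' x v)) :=
    hslope.mono_left (nhdsWithin_mono _ (fun t ht => ne_of_gt ht))
  refine le_of_tendsto hmono ?_
  filter_upwards [Ioc_mem_nhdsGT_of_mem (by norm_num : (0:ℝ) ∈ Ico (0:ℝ) 1)] with t ht
  have hc : f (x + t • v) ≤ (1 - t) * f x + t * f y := by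
    have h2 : x + t • v = (1-t) • x + t • y := by
      rw [hv, smul_sub, sub_smul, one_smul]; abel
    rw [h2]
    exact hfconv.2 (mem_univ x) (mem_univ y) (by linarith [ht.2]) (le_of_lt ht.1) (by ring)
  rw [slope_def_field]
  rw [div_le_iff₀ (by simpa using ht.1)]
  simp only [zero_smul, add_zero, sub_zero]
  nlinarith [hc]

/-- Recursion lemma: h(k+1) ≤ (1-γk) h k + γk c k with c → 0 implies h → 0. -/
lemma fw_recursion (h c γ : ℕ → ℝ) (hh0 : ∀ k, 0 ≤ h k)
    (hγ : ∀ k, γ k ∈ Set.Ioc (0:ℝ) 1)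
    (hrec : ∀ k, h (k+1) ≤ (1 - γ k) * h k + γ k * c k)
    (hc : Tendsto c atTop (𝓝 0))
    (hs : Tendsto (fun n => ∑ k ∈ Finset.range n, γ k) atTop atTop) :
    Tendsto h atTop (𝓝 0) := by
  rw [Metric.tendsto_atTop]
  intro ε hε
  obtain ⟨N, hN⟩ := (Metric.tendsto_atTop.mp hc) (ε/2) (by linarith)
  set a : ℕ → ℝ := fun k => max (h k - ε/2) 0 with ha
  have ha0 : ∀ k, 0 ≤ a k := fun k => le_max_right _ _
  have hstep : ∀ k, N ≤ k → a (k+1) ≤ (1 - γ k) * a k := by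
    intro k hk
    have hck : c k < ε/2 := by
      have := hN k hk
      rw [Real.dist_eq, sub_zero] at this
      exact lt_of_le_of_lt (le_abs_self _) this
    have hγk := hγ k
    have h1 : h (k+1) - ε/2 ≤ (1 - γ k) * a k := by
      have h2 : h k - ε/2 ≤ a k := le_max_left _ _
      have h3 : (1 - γ k) * (h k - ε/2) ≤ (1 - γ k) * a k :=
        mul_le_mul_of_nonneg_left h2 (by linarith [hγk.2])
      nlinarith [hrec k, hγk.1, hγk.2]
    have h4 : (0:ℝ) ≤ (1 - γ k) * a k :=
      mul_nonneg (by linarith [hγk.2]) (ha0 k)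
    exact max_le h1 h4
  set S : ℕ → ℝ := fun n => ∑ k ∈ Finset.range n, γ k with hS
  have hkey : ∀ m, a (N + m) ≤ a N * Real.exp (-(S (N + m) - S N)) := by
    intro m
    induction m with
    | zero => simp
    | succ m ih =>
      have h1 := hstep (N + m) (Nat.le_add_right _ _)
      have hγk := hγ (N + m)
      have h2 : (1 - γ (N + m)) * a (N + m) ≤ Real.exp (-(γ (N + m))) * a (N + m) := by
        apply mul_le_mul_of_nonneg_right _ (ha0 _)
        have := Real.add_one_le_exp (-(γ (N + m)))
        linarith
      have h3 : Real.exp (-(γ (N + m))) * a (N + m)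
          ≤ Real.exp (-(γ (N + m))) * (a N * Real.exp (-(S (N + m) - S N))) :=
        mul_le_mul_of_nonneg_left ih (Real.exp_pos _).le
      have h4 : S (N + m + 1) = S (N + m) + γ (N + m) := by
        simp [hS, Finset.sum_range_succ]
      calc a (N + (m+1)) = a (N + m + 1) := by ring_nf
        _ ≤ (1 - γ (N + m)) * a (N + m) := h1
        _ ≤ Real.exp (-(γ (N + m))) * a (N + m) := h2
        _ ≤ Real.exp (-(γ (N + m))) * (a N * Real.exp (-(S (N + m) - S N))) := h3
        _ = a N * Real.exp (-(S (N + m + 1) - S N)) := by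
            rw [h4, show -(S (N + m) + γ (N + m) - S N)
              = -γ (N + m) + -(S (N + m) - S N) by ring, Real.exp_add]; ring
  have htail : Tendsto (fun n => a N * Real.exp (-(S n - S N))) atTop (𝓝 0) := by
    have h5 : Tendsto (fun n => S n - S N) atTop atTop := hs.atTop_add tendsto_const_nhds
    have h6 : Tendsto (fun n => Real.exp (-(S n - S N))) atTop (𝓝 0) :=
      Real.tendsto_exp_neg_atTop_nhds_zero.comp h5
    simpa using h6.const_mul (a N)
  have hev : ∀ᶠ n in atTop, a N * Real.exp (-(S n - S N)) < ε/2 :=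
    htail.eventually_lt_const (by linarith)
  obtain ⟨M, hM⟩ := eventually_atTop.mp hev
  refine ⟨max N M, fun n hn => ?_⟩
  have hnN : N ≤ n := le_trans (le_max_left _ _) hn
  have hnM : M ≤ n := le_trans (le_max_right _ _) hn
  have h7 : a n ≤ a N * Real.exp (-(S n - S N)) := by
    have := hkey (n - N)
    rwa [Nat.add_sub_cancel' hnN] at this
  have h8 : a n < ε/2 := lt_of_le_of_lt h7 (hM n hnM)
  have h9 : h n - ε/2 ≤ a n := le_max_left _ _
  rw [Real.dist_eq, sub_zero, abs_of_nonneg (hh0 n)]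
  linarith

/-- **Convergence of the generalized Frank–Wolfe algorithm with open loop stepsizes**
(Theorem 5.2). For the composite objective `φ = f + g`, with `f'` uniformly continuous
on `C`, `g` proper lsc convex and finite on `C`, and stepsizes satisfying the open loop
rule, the generalized Frank–Wolfe iterates satisfy `φ(x_k) → φ* = inf_C φ`. -/
theorem stmt_16
    {X : Type*} [NormedAddCommGroup X] [NormedSpace ℝ X] [CompleteSpace X]
    (C : Set X) (hCne : C.Nonempty) (hCcl : IsClosed C)
    (hCbd : Bornology.IsBounded C) (hCcv : Convex ℝ C)
    (f : X → ℝ) (f' : X → X →L[ℝ] ℝ)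
    (hfconv : ConvexOn ℝ Set.univ f)
    (hfderiv : ∀ x : X, HasFDerivAt f (f' x) x)
    (hfUC : UniformContinuousOn f' C)
    (g : X → EReal)
    (hgproper : ∃ z : X, g z ≠ ⊤) (hgnebot : ∀ z : X, g z ≠ ⊥)
    (hglsc : LowerSemicontinuous g)
    (hgconv : ∀ z w : X, ∀ lam : ℝ, 0 < lam → lam < 1 →
      g (lam • z + (1 - lam) • w) ≤ (lam : EReal) * g z + ((1 - lam : ℝ) : EReal) * g w)
    (hgC : ∀ z ∈ C, g z ≠ ⊤)
    (xstar : X) (hxstarC : xstar ∈ C)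
    (hxstarmin : ∀ y ∈ C, (f xstar : EReal) + g xstar ≤ (f y : EReal) + g y)
    (x xbar : ℕ → X) (γ : ℕ → ℝ)
    (hx0 : x 0 ∈ C)
    (hxbarC : ∀ k, xbar k ∈ C)
    (hxbarmin : ∀ k, ∀ y ∈ C,
      (f' (x k) (xbar k) : EReal) + g (xbar k) ≤ (f' (x k) y : EReal) + g y)
    (hupdate : ∀ k, x (k + 1) = x k + γ k • (xbar k - x k))
    (hγ : ∀ k, γ k ∈ Set.Ioc (0 : ℝ) 1)
    (hγ0 : Tendsto γ atTop (𝓝 0))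
    (hγsum : Tendsto (fun n => ∑ k ∈ Finset.range n, γ k) atTop atTop) :
    Tendsto (fun k => (f (x k) : EReal) + g (x k)) atTop
      (𝓝 ((f xstar : EReal) + g xstar)) := by
  -- diameter bound
  obtain ⟨R, hR⟩ := hCbd.exists_norm_le
  have hR0 : 0 ≤ R := le_trans (norm_nonneg _) (hR _ hCne.choose_spec)
  have hdiam : ∀ u ∈ C, ∀ v ∈ C, ‖u - v‖ ≤ 2 * R := by
    intro u hu v hv
    calc ‖u - v‖ ≤ ‖u‖ + ‖v‖ := norm_sub_le _ _
      _ ≤ 2 * R := by linarith [hR u hu, hR v hv]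
  -- iterates remain in C
  have hxC : ∀ k, x k ∈ C := by
    intro k
    induction k with
    | zero => exact hx0
    | succ k ih =>
      rw [hupdate k, show x k + γ k • (xbar k - x k) = γ k • xbar k + (1 - γ k) • x k by
        rw [smul_sub, sub_smul, one_smul]; abel]
      exact hCcv (hxbarC k) ih (hγ k).1.le (by linarith [(hγ k).2]) (by ring)
  -- real-valued g on C
  set G : X → ℝ := fun z => (g z).toReal with hG
  have hgcoe : ∀ z ∈ C, g z = ((G z : ℝ) : EReal) := fun z hz =>
    (EReal.coe_toReal (hgC z hz) (hgnebot z)).symm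
  have hxstarmin' : ∀ y ∈ C, f xstar + G xstar ≤ f y + G y := by
    intro y hy
    have h1 := hxstarmin y hy
    rw [hgcoe xstar hxstarC, hgcoe y hy, ← EReal.coe_add, ← EReal.coe_add] at h1
    exact_mod_cast h1
  have hxbarmin' : ∀ k, f' (x k) (xbar k) + G (xbar k) ≤ f' (x k) xstar + G xstar := by
    intro k
    have h1 := hxbarmin k xstar hxstarC
    rw [hgcoe _ (hxbarC k), hgcoe xstar hxstarC, ← EReal.coe_add, ← EReal.coe_add] at h1
    exact_mod_cast h1
  set e : ℕ → ℝ := fun k => ‖f' (x (k+1)) - f' (x k)‖ with he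
  -- convexity step for g
  have hgstep : ∀ k, G (x (k+1)) ≤ γ k * G (xbar k) + (1 - γ k) * G (x k) := by
    intro k
    have hxeq : x (k+1) = γ k • xbar k + (1 - γ k) • x k := by
      rw [hupdate k, smul_sub, sub_smul, one_smul]; abel
    rcases eq_or_lt_of_le (hγ k).2 with h1 | h1
    · have hx1 : x (k+1) = xbar k := by
        rw [hxeq, h1]; simp
      rw [hx1, h1]; norm_num
    · have h2 := hgconv (xbar k) (x k) (γ k) (hγ k).1 h1
      rw [← hxeq, hgcoe _ (hxC (k+1)), hgcoe _ (hxbarC k), hgcoe _ (hxC k),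
        ← EReal.coe_mul, ← EReal.coe_mul, ← EReal.coe_add] at h2
      exact_mod_cast h2
  -- descent step for f
  have hfstep : ∀ k, f (x (k+1)) ≤ f (x k)
      + γ k * (f' (x k) (xbar k) - f' (x k) (x k)) + γ k * (e k * (2*R)) := by
    intro k
    have hg1 := fw_grad_ineq f f' hfconv hfderiv (x (k+1)) (x k)
    have hdiff : x k - x (k+1) = -(γ k • (xbar k - x k)) := by rw [hupdate k]; abel
    rw [hdiff, map_neg, map_smul] at hg1
    simp only [smul_eq_mul] at hg1
    have key : f (x (k+1)) ≤ f (x k) + γ k * (f' (x (k+1)) (xbar k - x k)) := by linarith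
    have hop : f' (x (k+1)) (xbar k - x k) - f' (x k) (xbar k - x k) ≤ e k * (2*R) := by
      have h2 : f' (x (k+1)) (xbar k - x k) - f' (x k) (xbar k - x k)
          = (f' (x (k+1)) - f' (x k)) (xbar k - x k) := by simp
      rw [h2]
      calc (f' (x (k+1)) - f' (x k)) (xbar k - x k)
          ≤ ‖(f' (x (k+1)) - f' (x k)) (xbar k - x k)‖ := le_abs_self _
        _ ≤ e k * ‖xbar k - x k‖ := ContinuousLinearMap.le_opNorm _ _
        _ ≤ e k * (2*R) :=
            mul_le_mul_of_nonneg_left (hdiam _ (hxbarC k) _ (hxC k)) (norm_nonneg _)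
    have hmap : f' (x k) (xbar k - x k) = f' (x k) (xbar k) - f' (x k) (x k) :=
      map_sub _ _ _
    rw [hmap] at hop
    have hmul := mul_le_mul_of_nonneg_left hop (hγ k).1.le
    nlinarith [key, hmul]
  -- the gap sequence
  set h : ℕ → ℝ := fun k => f (x k) + G (x k) - (f xstar + G xstar) with hhdef
  have hh0 : ∀ k, 0 ≤ h k := by
    intro k
    have := hxstarmin' (x k) (hxC k)
    simp only [hhdef]; linarith
  have hrec : ∀ k, h (k+1) ≤ (1 - γ k) * h k + γ k * (e k * (2*R)) := by
    intro k
    have f1 := hfstep k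
    have f2 := hgstep k
    have f3 := hxbarmin' k
    have f4 := fw_grad_ineq f f' hfconv hfderiv (x k) xstar
    rw [map_sub] at f4
    have f34 : f' (x k) (xbar k) + G (xbar k)
        ≤ f xstar - f (x k) + f' (x k) (x k) + G xstar := by linarith
    have f34m := mul_le_mul_of_nonneg_left f34 (hγ k).1.le
    simp only [hhdef]
    nlinarith [f1, f2, f34m]
  -- e tends to 0
  have he0 : Tendsto e atTop (𝓝 0) := by
    rw [Metric.tendsto_atTop]
    intro ε hε
    obtain ⟨δ, hδ0, hδ⟩ := Metric.uniformContinuousOn_iff.mp hfUC ε hε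
    have h5 : Tendsto (fun k => γ k * (2*R)) atTop (𝓝 0) := by
      simpa using hγ0.mul_const (2*R)
    obtain ⟨N, hN⟩ := eventually_atTop.mp (h5.eventually_lt_const hδ0)
    refine ⟨N, fun k hk => ?_⟩
    have hd : dist (x (k+1)) (x k) < δ := by
      rw [dist_eq_norm, hupdate k, show x k + γ k • (xbar k - x k) - x k
        = γ k • (xbar k - x k) by abel, norm_smul]
      calc ‖γ k‖ * ‖xbar k - x k‖ ≤ γ k * (2*R) := by
            rw [Real.norm_eq_abs, abs_of_pos (hγ k).1]
            exact mul_le_mul_of_nonneg_left (hdiam _ (hxbarC k) _ (hxC k)) (hγ k).1.le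
        _ < δ := hN k hk
    have h6 := hδ (x (k+1)) (hxC (k+1)) (x k) (hxC k) hd
    rw [dist_eq_norm] at h6
    rw [Real.dist_eq, sub_zero, abs_of_nonneg (norm_nonneg _)]
    exact h6
  have hc0 : Tendsto (fun k => e k * (2*R)) atTop (𝓝 0) := by
    simpa using he0.mul_const (2*R)
  have hmain := fw_recursion h (fun k => e k * (2*R)) γ hh0 hγ hrec hc0 hγsum
  have hreal : Tendsto (fun k => f (x k) + G (x k)) atTop (𝓝 (f xstar + G xstar)) := by
    have h7 := hmain.add_const (f xstar + G xstar)
    simp only [hhdef, sub_add_cancel, zero_add] at h7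
    exact h7
  have hER : Tendsto (fun k => ((f (x k) + G (x k) : ℝ) : EReal)) atTop
      (𝓝 ((f xstar + G xstar : ℝ) : EReal)) := EReal.tendsto_coe.mpr hreal
  have hpt : ((f xstar + G xstar : ℝ) : EReal) = (f xstar : EReal) + g xstar := by
    rw [EReal.coe_add, hgcoe xstar hxstarC]
  have hfun : ∀ k, ((f (x k) + G (x k) : ℝ) : EReal) = (f (x k) : EReal) + g (x k) := by
    intro k; rw [EReal.coe_add, hgcoe _ (hxC k)]
  rw [← hpt]
  exact hER.congr hfun
end
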